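/- Let d ≥ 1, let D ⊆ ℝ × (Fin d → ℝ) be an open set, let a : ℝ × (Fin d → ℝ) → (Fin d → ℝ) and b : ℝ × (Fin d → ℝ) → Matrix (Fin d) (Fin d) ℝ be arbitrary coefficient functions, and let v : ℝ × (Fin d → ℝ) → ℝ be twice continuously differentiable on D with v(t, x) > 0 for all (t, x) ∈ D. Set u = v². Then v satisfies the linear Kolmogorov backward equation ∂_t v + Σ_{i} a_i·∂_{x_i} v + (1/2)·Σ_{i,j,k} b_{ik}·b_{jk}·∂²_{x_i x_j} v = 0 at every point of D if and only if u satisfies the nonlinear equation ∂_t u + Σ_{i} a_i·∂_{x_i} u + (1/2)·Σ_{i,j,k} b_{ik}·b_{jk}·∂²_{x_i x_j} u − (1/(4u))·Σ_{k} ( Σ_{j} b_{jk}·∂_{x_j} u )² = 0 at every point of D. -/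

import Mathlib

open Real

/-- Partial derivative in the first (time) variable. -/
noncomputable def ptderiv {d : ℕ} (v : ℝ × (Fin d → ℝ) → ℝ) (p : ℝ × (Fin d → ℝ)) : ℝ :=
  deriv (fun s => v (s, p.2)) p.1

/-- Partial derivative in the i-th spatial coordinate. -/
noncomputable def pxderiv {d : ℕ} (i : Fin d) (v : ℝ × (Fin d → ℝ) → ℝ)
    (p : ℝ × (Fin d → ℝ)) : ℝ :=
  deriv (fun s => v (p.1, Function.update p.2 i s)) (p.2 i)

section Aux

variable {d : ℕ}

lemma curve_x (p : ℝ × (Fin d → ℝ)) (i : Fin d) :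
    HasDerivAt (fun s : ℝ => ((p.1, Function.update p.2 i s) : ℝ × (Fin d → ℝ)))
      ((0 : ℝ), Pi.single i (1 : ℝ)) (p.2 i) :=
  (hasDerivAt_const _ p.1).prodMk (hasDerivAt_update p.2 i (p.2 i))

lemma curve_x_val (p : ℝ × (Fin d → ℝ)) (i : Fin d) :
    ((p.1, Function.update p.2 i (p.2 i)) : ℝ × (Fin d → ℝ)) = p := by
  simp [Function.update_eq_self]

lemma hasDerivAt_px {v : ℝ × (Fin d → ℝ) → ℝ} {p : ℝ × (Fin d → ℝ)}
    (hv : DifferentiableAt ℝ v p) (i : Fin d) :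
    HasDerivAt (fun s => v (p.1, Function.update p.2 i s))
      (fderiv ℝ v p ((0 : ℝ), Pi.single i (1 : ℝ))) (p.2 i) := by
  have h2 : HasFDerivAt v (fderiv ℝ v p) ((p.1, Function.update p.2 i (p.2 i))) := by
    rw [curve_x_val]; exact hv.hasFDerivAt
  exact h2.comp_hasDerivAt _ (curve_x p i)

lemma px_eq_fderiv {v : ℝ × (Fin d → ℝ) → ℝ} {p : ℝ × (Fin d → ℝ)}
    (hv : DifferentiableAt ℝ v p) (i : Fin d) :
    pxderiv i v p = fderiv ℝ v p ((0 : ℝ), Pi.single i (1 : ℝ)) :=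
  (hasDerivAt_px hv i).deriv

lemma hasDerivAt_pt {v : ℝ × (Fin d → ℝ) → ℝ} {p : ℝ × (Fin d → ℝ)}
    (hv : DifferentiableAt ℝ v p) :
    HasDerivAt (fun s => v (s, p.2)) (fderiv ℝ v p ((1 : ℝ), (0 : Fin d → ℝ))) p.1 :=
  hv.hasFDerivAt.comp_hasDerivAt _ ((hasDerivAt_id p.1).prodMk (hasDerivAt_const _ _))

lemma pt_sq {v : ℝ × (Fin d → ℝ) → ℝ} {p : ℝ × (Fin d → ℝ)}
    (hv : DifferentiableAt ℝ v p) :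
    ptderiv (fun q => v q ^ 2) p = 2 * v p * ptderiv v p := by
  have h := hasDerivAt_pt hv
  have h2 := (h.pow 2).deriv
  simp only [Nat.cast_ofNat, pow_one] at h2
  show deriv ((fun s => v (s, p.2)) ^ 2) p.1 = _
  rw [h2, ptderiv, h.deriv]
  norm_num

lemma px_sq {v : ℝ × (Fin d → ℝ) → ℝ} {p : ℝ × (Fin d → ℝ)}
    (hv : DifferentiableAt ℝ v p) (i : Fin d) :
    pxderiv i (fun q => v q ^ 2) p = 2 * v p * pxderiv i v p := by
  have h := hasDerivAt_px hv i
  have h2 := (h.pow 2).deriv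
  simp only [Nat.cast_ofNat, pow_one, curve_x_val] at h2
  show deriv ((fun s => v (p.1, Function.update p.2 i s)) ^ 2) (p.2 i) = _
  rw [h2, pxderiv, h.deriv]
  norm_num

lemma pxx_sq {D : Set (ℝ × (Fin d → ℝ))} (hD : IsOpen D)
    {v : ℝ × (Fin d → ℝ) → ℝ} (hv : ContDiffOn ℝ 2 v D)
    {p : ℝ × (Fin d → ℝ)} (hp : p ∈ D) (i j : Fin d) :
    pxderiv i (pxderiv j (fun q => v q ^ 2)) p
      = 2 * pxderiv i v p * pxderiv j v p + 2 * v p * pxderiv i (pxderiv j v) p := by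
  have hvd : ∀ q ∈ D, DifferentiableAt ℝ v q := fun q hq =>
    (hv.differentiableOn two_ne_zero).differentiableAt (hD.mem_nhds hq)
  have hfd : ContDiffOn ℝ 1 (fderiv ℝ v) D := hv.fderiv_of_isOpen hD (by norm_num)
  set w : ℝ × (Fin d → ℝ) := ((0 : ℝ), Pi.single j (1 : ℝ)) with hw
  have hGd : DifferentiableAt ℝ (fun q => fderiv ℝ v q w) p := by
    have h1 : DifferentiableAt ℝ (fderiv ℝ v) p :=
      (hfd.differentiableOn one_ne_zero).differentiableAt (hD.mem_nhds hp)
    exact ((ContinuousLinearMap.apply ℝ ℝ w).differentiableAt).comp p h1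
  have hgG : pxderiv j v =ᶠ[nhds p] fun q => fderiv ℝ v q w :=
    Filter.eventually_of_mem (hD.mem_nhds hp) (fun q hq => px_eq_fderiv (hvd q hq) j)
  have hgd : DifferentiableAt ℝ (pxderiv j v) p :=
    (hgG.differentiableAt_iff).mpr hGd
  have huu : pxderiv j (fun q => v q ^ 2) =ᶠ[nhds p]
      fun q => 2 * v q * pxderiv j v q :=
    Filter.eventually_of_mem (hD.mem_nhds hp) (fun q hq => px_sq (hvd q hq) j)
  -- the spatial curve
  set c : ℝ → ℝ × (Fin d → ℝ) := fun s => (p.1, Function.update p.2 i s) with hc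
  have hcv : c (p.2 i) = p := curve_x_val p i
  have hct : Filter.Tendsto c (nhds (p.2 i)) (nhds p) := by
    have h := (curve_x p i).continuousAt
    rwa [ContinuousAt, curve_x_val] at h
  have hcd : DifferentiableAt ℝ c (p.2 i) := (curve_x p i).differentiableAt
  have heq : (fun s => pxderiv j (fun q => v q ^ 2) (c s)) =ᶠ[nhds (p.2 i)]
      fun s => 2 * v (c s) * pxderiv j v (c s) := huu.comp_tendsto hct
  have hv1 : DifferentiableAt ℝ (fun s => v (c s)) (p.2 i) :=
    (hasDerivAt_px (hvd p hp) i).differentiableAt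
  have hg2 : DifferentiableAt ℝ (fun s => pxderiv j v (c s)) (p.2 i) := by
    have h1 : DifferentiableAt ℝ (pxderiv j v) (c (p.2 i)) := by rw [hcv]; exact hgd
    exact h1.comp _ hcd
  have step : pxderiv i (pxderiv j (fun q => v q ^ 2)) p
      = deriv (fun s => 2 * v (c s) * pxderiv j v (c s)) (p.2 i) := heq.deriv_eq
  rw [step]
  have hprod : deriv (fun s => 2 * v (c s) * pxderiv j v (c s)) (p.2 i)
      = deriv (fun s => 2 * v (c s)) (p.2 i) * pxderiv j v (c (p.2 i))
        + (2 * v (c (p.2 i))) * deriv (fun s => pxderiv j v (c s)) (p.2 i) :=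
    deriv_mul (hv1.const_mul 2) hg2
  rw [hprod, hcv]
  have hdv : deriv (fun s => 2 * v (c s)) (p.2 i) = 2 * pxderiv i v p := by
    rw [deriv_const_mul 2 hv1]
    rfl
  rw [hdv]
  rfl

end Aux

theorem hjb_iff_kbe
    {d : ℕ} (hd : 1 ≤ d)
    (D : Set (ℝ × (Fin d → ℝ))) (hD : IsOpen D)
    (a : ℝ × (Fin d → ℝ) → Fin d → ℝ)
    (b : ℝ × (Fin d → ℝ) → Matrix (Fin d) (Fin d) ℝ)
    (v : ℝ × (Fin d → ℝ) → ℝ)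
    (hv : ContDiffOn ℝ 2 v D)
    (hvpos : ∀ p ∈ D, 0 < v p)
    (u : ℝ × (Fin d → ℝ) → ℝ) (hu : u = fun p => (v p) ^ 2) :
    (∀ p ∈ D,
        ptderiv v p + (∑ i, a p i * pxderiv i v p) +
          (1 / 2) * ∑ i, ∑ j, ∑ k, b p i k * b p j k * pxderiv i (pxderiv j v) p = 0) ↔
    (∀ p ∈ D,
        ptderiv u p + (∑ i, a p i * pxderiv i u p) +
          (1 / 2) * (∑ i, ∑ j, ∑ k, b p i k * b p j k * pxderiv i (pxderiv j u) p) -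
          (1 / (4 * u p)) * ∑ k, (∑ j, b p j k * pxderiv j u p) ^ 2 = 0) := by
  subst hu
  have hvd : ∀ q ∈ D, DifferentiableAt ℝ v q := fun q hq =>
    (hv.differentiableOn two_ne_zero).differentiableAt (hD.mem_nhds hq)
  have key : ∀ p ∈ D,
      ptderiv (fun q => v q ^ 2) p + (∑ i, a p i * pxderiv i (fun q => v q ^ 2) p) +
        (1 / 2) * (∑ i, ∑ j, ∑ k, b p i k * b p j k *
          pxderiv i (pxderiv j (fun q => v q ^ 2)) p) -
        (1 / (4 * (fun q => v q ^ 2) p)) *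
          ∑ k, (∑ j, b p j k * pxderiv j (fun q => v q ^ 2) p) ^ 2
      = 2 * v p * (ptderiv v p + (∑ i, a p i * pxderiv i v p) +
          (1 / 2) * ∑ i, ∑ j, ∑ k, b p i k * b p j k * pxderiv i (pxderiv j v) p) := by
    intro p hp
    have hvne : v p ≠ 0 := (hvpos p hp).ne'
    have e1 : ptderiv (fun q => v q ^ 2) p = 2 * v p * ptderiv v p := pt_sq (hvd p hp)
    have e2 : ∀ i, pxderiv i (fun q => v q ^ 2) p = 2 * v p * pxderiv i v p :=
      fun i => px_sq (hvd p hp) i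
    have e3 : ∀ i j, pxderiv i (pxderiv j (fun q => v q ^ 2)) p
        = 2 * pxderiv i v p * pxderiv j v p + 2 * v p * pxderiv i (pxderiv j v) p :=
      fun i j => pxx_sq hD hv hp i j
    simp only [e1, e2, e3]
    -- algebra
    set A := ptderiv v p with hA
    set P : Fin d → ℝ := fun i => pxderiv i v p with hPdef
    set S : Fin d → Fin d → ℝ := fun j i => pxderiv j (pxderiv i v) p with hSdef
    have h4 : ∑ k, (∑ j, b p j k * (2 * v p * P j)) ^ 2
        = 4 * v p ^ 2 * ∑ i, ∑ j, ∑ k, b p i k * b p j k * (P i * P j) := by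
      have hk : ∀ k, (∑ j, b p j k * (2 * v p * P j)) ^ 2
          = 4 * v p ^ 2 * ∑ i, ∑ j, b p i k * b p j k * (P i * P j) := by
        intro k
        rw [sq, Finset.sum_mul_sum, Finset.mul_sum]
        refine Finset.sum_congr rfl fun i _ => ?_
        rw [Finset.mul_sum]
        exact Finset.sum_congr rfl fun j _ => by ring
      simp only [hk]
      rw [← Finset.mul_sum, Finset.sum_comm]
      congr 1
      exact Finset.sum_congr rfl fun i _ => Finset.sum_comm
    rw [h4]
    have h5 : ∑ i, ∑ j, ∑ k, b p i k * b p j k *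
          (2 * P i * P j + 2 * v p * S i j)
        = 2 * (∑ i, ∑ j, ∑ k, b p i k * b p j k * (P i * P j))
          + 2 * v p * ∑ i, ∑ j, ∑ k, b p i k * b p j k * S i j := by
      rw [Finset.mul_sum, Finset.mul_sum, ← Finset.sum_add_distrib]
      refine Finset.sum_congr rfl fun i _ => ?_
      rw [Finset.mul_sum, Finset.mul_sum, ← Finset.sum_add_distrib]
      refine Finset.sum_congr rfl fun j _ => ?_
      rw [Finset.mul_sum, Finset.mul_sum, ← Finset.sum_add_distrib]
      exact Finset.sum_congr rfl fun k _ => by ring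
    rw [h5]
    have h6 : ∑ i, a p i * (2 * v p * P i) = 2 * v p * ∑ i, a p i * P i := by
      rw [Finset.mul_sum]; exact Finset.sum_congr rfl fun i _ => by ring
    rw [h6]
    field_simp
    ring
  constructor
  · intro h p hp
    rw [key p hp, h p hp, mul_zero]
  · intro h p hp
    have h2 := h p hp
    rw [key p hp] at h2
    rcases mul_eq_zero.mp h2 with h3 | h3
    · exact absurd h3 (by
        have := (hvpos p hp).ne'
        positivity)
    · exact h3
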